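/- Let y₁', y₂', y₃' : [0,∞) → H solve the t-model system: dy₁'/dt = P B(y₁',y₃') + t P{B(Γ₁, y₃') + B(y₁', Γ₃)}, dy₂'/dt = −P B(y₂',y₃') − t P{B(Γ₂, y₃') + B(y₂', Γ₃)}, dy₃'/dt = −P B(y₁',y₁') + P B(y₂',y₂') − t P{B(Γ₁,y₁') + B(y₁',Γ₁)} + t P{B(Γ₂,y₂') + B(y₂',Γ₂)}, where Γ₁ = (I−P)B(y₁',y₃'), Γ₂ = −(I−P)B(y₂',y₃'), Γ₃ = −(I−P)B(y₁',y₁') + (I−P)B(y₂',y₂'). Then (1/2) d/dt (‖y₁'‖² + ‖y₂'‖² + ‖y₃'‖²) = −t(‖Γ₁‖² + ‖Γ₂‖² + ‖Γ₃‖²). In particular, for t ≥ 0 the L² norm of the t-model solution is non-increasing. -/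

import Mathlib

open scoped RealInnerProductSpace

theorem t_model_energy_identity
    {H : Type*} [NormedAddCommGroup H] [InnerProductSpace ℝ H]
    (P : H →L[ℝ] H)
    (hPsa : ∀ x y : H, ⟪P x, y⟫ = ⟪x, P y⟫)
    (hP2 : ∀ x : H, P (P x) = P x)
    (B : H →L[ℝ] H →L[ℝ] H)
    (hBsym : ∀ f g : H, B f g = B g f)
    (hBtri : ∀ f g h : H, ⟪B f g, h⟫ = ⟪B f h, g⟫)
    (y₁ y₂ y₃ Γ₁ Γ₂ Γ₃ : ℝ → H)
    (hΓ₁ : ∀ t, Γ₁ t = B (y₁ t) (y₃ t) - P (B (y₁ t) (y₃ t)))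
    (hΓ₂ : ∀ t, Γ₂ t = -(B (y₂ t) (y₃ t) - P (B (y₂ t) (y₃ t))))
    (hΓ₃ : ∀ t, Γ₃ t = -(B (y₁ t) (y₁ t) - P (B (y₁ t) (y₁ t)))
                        + (B (y₂ t) (y₂ t) - P (B (y₂ t) (y₂ t))))
    (hrange : ∀ t, P (y₁ t) = y₁ t ∧ P (y₂ t) = y₂ t ∧ P (y₃ t) = y₃ t)
    (hy₁ : ∀ t, HasDerivAt y₁
      (P (B (y₁ t) (y₃ t)) + t • P (B (Γ₁ t) (y₃ t) + B (y₁ t) (Γ₃ t))) t)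
    (hy₂ : ∀ t, HasDerivAt y₂
      (-P (B (y₂ t) (y₃ t)) - t • P (B (Γ₂ t) (y₃ t) + B (y₂ t) (Γ₃ t))) t)
    (hy₃ : ∀ t, HasDerivAt y₃
      (-P (B (y₁ t) (y₁ t)) + P (B (y₂ t) (y₂ t))
        - t • P (B (Γ₁ t) (y₁ t) + B (y₁ t) (Γ₁ t))
        + t • P (B (Γ₂ t) (y₂ t) + B (y₂ t) (Γ₂ t))) t) :
    (∀ t : ℝ, HasDerivAt (fun s => ‖y₁ s‖^2 + ‖y₂ s‖^2 + ‖y₃ s‖^2)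
        (-2 * t * (‖Γ₁ t‖^2 + ‖Γ₂ t‖^2 + ‖Γ₃ t‖^2)) t) ∧
    AntitoneOn (fun s => ‖y₁ s‖^2 + ‖y₂ s‖^2 + ‖y₃ s‖^2) (Set.Ici (0:ℝ)) := by
  have key : ∀ t : ℝ, HasDerivAt (fun s => ‖y₁ s‖^2 + ‖y₂ s‖^2 + ‖y₃ s‖^2)
      (-2 * t * (‖Γ₁ t‖^2 + ‖Γ₂ t‖^2 + ‖Γ₃ t‖^2)) t := by
    intro t
    obtain ⟨h1, h2, h3⟩ := hrange t
    -- P kills each Γ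
    have hPg1 : P (Γ₁ t) = 0 := by rw [hΓ₁]; simp [map_sub, hP2]
    have hPg2 : P (Γ₂ t) = 0 := by rw [hΓ₂]; simp [map_sub, hP2]
    have hPg3 : P (Γ₃ t) = 0 := by rw [hΓ₃]; simp [map_sub, map_add, map_neg, hP2]
    -- inner with P z for x in range of P
    have hPz : ∀ (z w : H), P w = w → ⟪P z, w⟫ = ⟪z, w⟫ := by
      intro z w hw; rw [hPsa, hw]
    have horth : ∀ (g z : H), P g = 0 → ⟪g, P z⟫ = 0 := by
      intro g z hg; rw [← hPsa, hg, inner_zero_left]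
    have hsub : ∀ (g z : H), P g = 0 → ⟪g, z⟫ = ⟪g, z - P z⟫ := by
      intro g z hg; rw [inner_sub_right, horth g z hg, sub_zero]
    -- zeroth order terms
    have e1 : ⟪P (B (y₁ t) (y₃ t)), y₁ t⟫ = ⟪B (y₁ t) (y₁ t), y₃ t⟫ := by
      rw [hPz _ _ h1, hBtri]
    have e2 : ⟪P (B (y₂ t) (y₃ t)), y₂ t⟫ = ⟪B (y₂ t) (y₂ t), y₃ t⟫ := by
      rw [hPz _ _ h2, hBtri]
    have e3 : ⟪P (B (y₁ t) (y₁ t)), y₃ t⟫ = ⟪B (y₁ t) (y₁ t), y₃ t⟫ := hPz _ _ h3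
    have e4 : ⟪P (B (y₂ t) (y₂ t)), y₃ t⟫ = ⟪B (y₂ t) (y₂ t), y₃ t⟫ := hPz _ _ h3
    -- ⟪B x₁ x₃, Γ₁⟫ = ‖Γ₁‖²
    have k1 : ⟪B (y₁ t) (y₃ t), Γ₁ t⟫ = ‖Γ₁ t‖^2 := by
      rw [real_inner_comm, hsub _ _ hPg1, ← hΓ₁, real_inner_self_eq_norm_sq]
    have k2 : ⟪B (y₂ t) (y₃ t), Γ₂ t⟫ = -‖Γ₂ t‖^2 := by
      rw [real_inner_comm, hsub _ _ hPg2]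
      have : B (y₂ t) (y₃ t) - P (B (y₂ t) (y₃ t)) = -(Γ₂ t) := by rw [hΓ₂, neg_neg]
      rw [this, inner_neg_right, real_inner_self_eq_norm_sq]
    -- f5
    have k3 : ⟪B (y₁ t) (y₁ t), Γ₃ t⟫ - ⟪B (y₂ t) (y₂ t), Γ₃ t⟫ = -‖Γ₃ t‖^2 := by
      rw [← inner_sub_left, real_inner_comm, hsub _ _ hPg3, map_sub]
      have : B (y₁ t) (y₁ t) - B (y₂ t) (y₂ t)
          - (P (B (y₁ t) (y₁ t)) - P (B (y₂ t) (y₂ t))) = -(Γ₃ t) := by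
        rw [hΓ₃]; abel
      rw [this, inner_neg_right, real_inner_self_eq_norm_sq]
    -- first order terms
    have gswap : ∀ (g x z : H), ⟪B g z, x⟫ = ⟪B x z, g⟫ := by
      intro g x z
      rw [hBtri, hBsym, hBtri]
    have f1 : ⟪P (B (Γ₁ t) (y₃ t) + B (y₁ t) (Γ₃ t)), y₁ t⟫
        = ‖Γ₁ t‖^2 + ⟪B (y₁ t) (y₁ t), Γ₃ t⟫ := by
      rw [hPz _ _ h1, inner_add_left, gswap, k1, hBtri]
    have f2 : ⟪P (B (Γ₂ t) (y₃ t) + B (y₂ t) (Γ₃ t)), y₂ t⟫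
        = -‖Γ₂ t‖^2 + ⟪B (y₂ t) (y₂ t), Γ₃ t⟫ := by
      rw [hPz _ _ h2, inner_add_left, gswap, k2, hBtri]
    have q1 : ⟪B (Γ₁ t) (y₁ t), y₃ t⟫ = ‖Γ₁ t‖^2 := by
      rw [gswap, hBsym (y₃ t), k1]
    have q2 : ⟪B (y₁ t) (Γ₁ t), y₃ t⟫ = ‖Γ₁ t‖^2 := by rw [hBtri, k1]
    have q3 : ⟪B (Γ₂ t) (y₂ t), y₃ t⟫ = -‖Γ₂ t‖^2 := by
      rw [gswap, hBsym (y₃ t), k2]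
    have q4 : ⟪B (y₂ t) (Γ₂ t), y₃ t⟫ = -‖Γ₂ t‖^2 := by rw [hBtri, k2]
    have f3 : ⟪P (B (Γ₁ t) (y₁ t) + B (y₁ t) (Γ₁ t)), y₃ t⟫ = 2 * ‖Γ₁ t‖^2 := by
      rw [hPz _ _ h3, inner_add_left, q1, q2]; ring
    have f4 : ⟪P (B (Γ₂ t) (y₂ t) + B (y₂ t) (Γ₂ t)), y₃ t⟫ = -(2 * ‖Γ₂ t‖^2) := by
      rw [hPz _ _ h3, inner_add_left, q3, q4]; ring
    have hn1 := ((hy₁ t).inner ℝ (hy₁ t))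
    have hn2 := ((hy₂ t).inner ℝ (hy₂ t))
    have hn3 := ((hy₃ t).inner ℝ (hy₃ t))
    simp only [real_inner_self_eq_norm_sq] at hn1 hn2 hn3
    have hsum := (hn1.add hn2).add hn3
    refine hsum.congr_deriv ?_
    symm
    have c1 : ∀ (u v : H), ⟪u, v⟫ + ⟪v, u⟫ = 2 * ⟪v, u⟫ := by
      intro u v; rw [real_inner_comm u v]; ring
    rw [c1, c1, c1]
    simp only [inner_add_left, inner_sub_left, inner_neg_left, real_inner_smul_left,
      e1, e2, e3, e4, f1, f2, f3, f4]
    linear_combination (-2 * t) * k3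
  refine ⟨key, ?_⟩
  have hdiff : ∀ t : ℝ, DifferentiableAt ℝ (fun s => ‖y₁ s‖^2 + ‖y₂ s‖^2 + ‖y₃ s‖^2) t :=
    fun t => (key t).differentiableAt
  apply antitoneOn_of_deriv_nonpos (convex_Ici 0)
  · exact fun t _ => (hdiff t).continuousAt.continuousWithinAt
  · exact fun t _ => (hdiff t).differentiableWithinAt
  · intro t ht
    rw [interior_Ici] at ht
    rw [(key t).deriv]
    have h0 : (0:ℝ) ≤ ‖Γ₁ t‖^2 + ‖Γ₂ t‖^2 + ‖Γ₃ t‖^2 := by positivity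
    nlinarith [(Set.mem_Ioi.mp ht).le]
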